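/- arXiv:1401.3630 — 2 statements merged into one kernel-verified Lean document; each statement's English description precedes it below -/
import Mathlib

section
/- Lagrange integral: along every solution (M(t), γ(t)) of the Euler–Poisson equations on e(3)* with the Hamiltonian H of the ellipsoid of revolution on a smooth plane, and with γ(t) ≠ 0 for all t, the third component M₃(t) of the angular momentum is constant. -/
open scoped RealInnerProductSpace
open Matrix

noncomputable section

/-- ℝ³ with the standard inner product. -/
abbrev E3 : Type := EuclideanSpace ℝ (Fin 3)

/-- The vector (x, y, z) ∈ ℝ³. -/
def vec3 (x y z : ℝ) : E3 := (EuclideanSpace.equiv (Fin 3) ℝ).symm ![x, y, z]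

/-- The cross product in ℝ³. -/
def cross3 (x y : E3) : E3 :=
  vec3 (x 1 * y 2 - x 2 * y 1) (x 2 * y 0 - x 0 * y 2) (x 0 * y 1 - x 1 * y 0)

/-- The diagonal operator diag(c₁, c₁, c₃) acting on ℝ³. -/
def diagOp (c1 c3 : ℝ) (x : E3) : E3 := vec3 (c1 * x 0) (c1 * x 1) (c3 * x 2)

/-- The vector r(γ) = −Bγ/√⟨γ, Bγ⟩, where B = diag(b₁², b₁², b₃²). -/
def rvec (b1 b3 : ℝ) (γ : E3) : E3 :=
  (-(Real.sqrt ⟪γ, diagOp (b1 ^ 2) (b3 ^ 2) γ⟫)⁻¹) • diagOp (b1 ^ 2) (b3 ^ 2) γ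

/-- a(γ) = γ × r(γ). -/
def avec (b1 b3 : ℝ) (γ : E3) : E3 := cross3 γ (rvec b1 b3 γ)

/-- The inertia matrix I = diag(I₁, I₁, I₃). -/
def Imat (I1 I3 : ℝ) : Matrix (Fin 3) (Fin 3) ℝ := Matrix.diagonal ![I1, I1, I3]

/-- A 3×3 matrix acting on ℝ³. -/
def mulVecE (A : Matrix (Fin 3) (Fin 3) ℝ) (x : E3) : E3 :=
  (EuclideanSpace.equiv (Fin 3) ℝ).symm (A.mulVec ((EuclideanSpace.equiv (Fin 3) ℝ) x))

/-- The matrix A(γ) = (I + m a(γ)⊗a(γ))⁻¹,  where (a⊗a)x = ⟨a, x⟩a. -/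
def Amat (b1 b3 I1 I3 m : ℝ) (γ : E3) : Matrix (Fin 3) (Fin 3) ℝ :=
  (Imat I1 I3 + m • Matrix.vecMulVec ((EuclideanSpace.equiv (Fin 3) ℝ) (avec b1 b3 γ))
      ((EuclideanSpace.equiv (Fin 3) ℝ) (avec b1 b3 γ)))⁻¹

/-- The Hamiltonian of the ellipsoid of revolution rolling on a smooth plane:
H(M, γ) = ½⟨I A(γ)M, A(γ)M⟩ + ½⟨a(γ), A(γ)M⟩² − m g ⟨r(γ), γ⟩. -/
def Ham (b1 b3 I1 I3 m g : ℝ) (M γ : E3) : ℝ :=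
  (1 / 2) * ⟪mulVecE (Imat I1 I3) (mulVecE (Amat b1 b3 I1 I3 m γ) M),
      mulVecE (Amat b1 b3 I1 I3 m γ) M⟫
  + (1 / 2) * ⟪avec b1 b3 γ, mulVecE (Amat b1 b3 I1 I3 m γ) M⟫ ^ 2
  - m * g * ⟪rvec b1 b3 γ, γ⟫

/-- The gradient of H in the M-variable, ∂H/∂M. -/
def gradM (H : E3 → E3 → ℝ) (M γ : E3) : E3 := gradient (fun M' => H M' γ) M

/-- The gradient of H in the γ-variable, ∂H/∂γ. -/
def gradG (H : E3 → E3 → ℝ) (M γ : E3) : E3 := gradient (fun γ' => H M γ') γ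

/-- The differentiable curves (M, γ) solve the Euler–Poisson equations on e(3)* with
Hamiltonian H:  Ṁ = M × ∂H/∂M + γ × ∂H/∂γ,  γ̇ = γ × ∂H/∂M. -/
def EulerPoisson (H : E3 → E3 → ℝ) (M γ : ℝ → E3) : Prop :=
  Differentiable ℝ M ∧ Differentiable ℝ γ ∧
  (∀ t, deriv M t =
      cross3 (M t) (gradM H (M t) (γ t)) + cross3 (γ t) (gradG H (M t) (γ t))) ∧
  (∀ t, deriv γ t = cross3 (γ t) (gradM H (M t) (γ t)))


@[simp] lemma vec3_app0 (x y z : ℝ) : vec3 x y z 0 = x := rfl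

@[simp] lemma vec3_app1 (x y z : ℝ) : vec3 x y z 1 = y := rfl

@[simp] lemma vec3_app2 (x y z : ℝ) : vec3 x y z 2 = z := rfl

lemma e3_ext {x y : E3} (h0 : x 0 = y 0) (h1 : x 1 = y 1) (h2 : x 2 = y 2) : x = y := by
  ext i
  fin_cases i <;> assumption

lemma inner_e3 (x y : E3) : ⟪x, y⟫ = x 0 * y 0 + x 1 * y 1 + x 2 * y 2 := by
  simp [PiLp.inner_apply, Fin.sum_univ_three]
  ring

def rot (θ : ℝ) (x : E3) : E3 :=
  vec3 (Real.cos θ * x 0 - Real.sin θ * x 1) (Real.sin θ * x 0 + Real.cos θ * x 1) (x 2)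

@[simp] lemma rot_app0 (θ : ℝ) (x : E3) : rot θ x 0 = Real.cos θ * x 0 - Real.sin θ * x 1 := rfl

@[simp] lemma rot_app1 (θ : ℝ) (x : E3) : rot θ x 1 = Real.sin θ * x 0 + Real.cos θ * x 1 := rfl

@[simp] lemma rot_app2 (θ : ℝ) (x : E3) : rot θ x 2 = x 2 := rfl

@[simp] lemma diagOp_app0 (c1 c3 : ℝ) (x : E3) : diagOp c1 c3 x 0 = c1 * x 0 := rfl

@[simp] lemma diagOp_app1 (c1 c3 : ℝ) (x : E3) : diagOp c1 c3 x 1 = c1 * x 1 := rfl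

@[simp] lemma diagOp_app2 (c1 c3 : ℝ) (x : E3) : diagOp c1 c3 x 2 = c3 * x 2 := rfl

@[simp] lemma cross3_app0 (x y : E3) : cross3 x y 0 = x 1 * y 2 - x 2 * y 1 := rfl

@[simp] lemma cross3_app1 (x y : E3) : cross3 x y 1 = x 2 * y 0 - x 0 * y 2 := rfl

@[simp] lemma cross3_app2 (x y : E3) : cross3 x y 2 = x 0 * y 1 - x 1 * y 0 := rfl

@[simp] lemma smul_app (c : ℝ) (x : E3) (i : Fin 3) : (c • x) i = c * x i := rfl

lemma rot_zero (x : E3) : rot 0 x = x := by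
  apply e3_ext <;> simp

lemma inner_rot (θ : ℝ) (x y : E3) : ⟪rot θ x, rot θ y⟫ = ⟪x, y⟫ := by
  have h := Real.sin_sq_add_cos_sq θ
  simp only [inner_e3, rot_app0, rot_app1, rot_app2]
  linear_combination (x 0 * y 0 + x 1 * y 1) * h

lemma rot_diagOp (θ c1 c3 : ℝ) (x : E3) : diagOp c1 c3 (rot θ x) = rot θ (diagOp c1 c3 x) := by
  apply e3_ext <;> simp <;> ring

lemma rot_smul (θ c : ℝ) (x : E3) : rot θ (c • x) = c • rot θ x := by
  apply e3_ext <;> simp <;> ring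

lemma cross3_rot (θ : ℝ) (x y : E3) : cross3 (rot θ x) (rot θ y) = rot θ (cross3 x y) := by
  have h := Real.sin_sq_add_cos_sq θ
  apply e3_ext <;> simp only [cross3_app0, cross3_app1, cross3_app2, rot_app0, rot_app1, rot_app2]
  · ring
  · ring
  · linear_combination (x 0 * y 1 - x 1 * y 0) * h

lemma rvec_rot (b1 b3 θ : ℝ) (γ : E3) : rvec b1 b3 (rot θ γ) = rot θ (rvec b1 b3 γ) := by
  unfold rvec
  rw [rot_diagOp, inner_rot, rot_smul]

lemma avec_rot (b1 b3 θ : ℝ) (γ : E3) : avec b1 b3 (rot θ γ) = rot θ (avec b1 b3 γ) := by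
  unfold avec
  rw [rvec_rot, cross3_rot]

def rotS (θ : ℝ) : Matrix (Fin 3) (Fin 3) ℝ :=
  Matrix.of ![![Real.cos θ, -Real.sin θ, 0], ![Real.sin θ, Real.cos θ, 0], ![0, 0, 1]]

@[simp] lemma equivE_apply (x : E3) (i : Fin 3) : (EuclideanSpace.equiv (Fin 3) ℝ) x i = x i := rfl

lemma mulVecE_apply (A : Matrix (Fin 3) (Fin 3) ℝ) (x : E3) (i : Fin 3) :
    mulVecE A x i = A i 0 * x 0 + A i 1 * x 1 + A i 2 * x 2 := by
  show (A.mulVec fun j => x j) i = _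
  simp [Matrix.mulVec, dotProduct, Fin.sum_univ_three]

lemma transpose_rotS (θ : ℝ) : (rotS θ)ᵀ = rotS (-θ) := by
  ext i j
  fin_cases i <;> fin_cases j <;>
    simp [rotS, Matrix.transpose_apply]

lemma rotS_zero : rotS 0 = 1 := by
  ext i j
  fin_cases i <;> fin_cases j <;> simp [rotS, Matrix.one_apply, Matrix.vecHead, Matrix.vecTail]

lemma rotS_mul (α β : ℝ) : rotS α * rotS β = rotS (α + β) := by
  ext i j
  fin_cases i <;> fin_cases j <;>
    simp [rotS, Matrix.mul_apply, Fin.sum_univ_three, Real.cos_add, Real.sin_add] <;> ring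

lemma rotS_mul_transpose (θ : ℝ) : rotS θ * (rotS θ)ᵀ = 1 := by
  rw [transpose_rotS, rotS_mul, add_neg_cancel, rotS_zero]

lemma transpose_mul_rotS (θ : ℝ) : (rotS θ)ᵀ * rotS θ = 1 := by
  rw [transpose_rotS, rotS_mul, neg_add_cancel, rotS_zero]

lemma rotS_inv (θ : ℝ) : (rotS θ)⁻¹ = (rotS θ)ᵀ :=
  Matrix.inv_eq_right_inv (rotS_mul_transpose θ)

lemma rotS_transpose_inv (θ : ℝ) : ((rotS θ)ᵀ)⁻¹ = rotS θ :=
  Matrix.inv_eq_right_inv (transpose_mul_rotS θ)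

lemma equiv_rot (θ : ℝ) (x : E3) :
    (EuclideanSpace.equiv (Fin 3) ℝ) (rot θ x) = (rotS θ).mulVec ((EuclideanSpace.equiv (Fin 3) ℝ) x) := by
  funext i
  fin_cases i <;>
    simp [rot, rotS, Matrix.mulVec, dotProduct, Fin.sum_univ_three] <;> ring

lemma vecMulVec_conj (S : Matrix (Fin 3) (Fin 3) ℝ) (v : Fin 3 → ℝ) :
    Matrix.vecMulVec (S.mulVec v) (S.mulVec v) = S * Matrix.vecMulVec v v * Sᵀ := by
  ext i j
  simp [Matrix.vecMulVec_apply, Matrix.mul_apply, Matrix.mulVec, dotProduct,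
    Fin.sum_univ_three, Matrix.transpose_apply]
  ring

lemma rotS_mul_Imat (θ I1 I3 : ℝ) : rotS θ * Imat I1 I3 = Imat I1 I3 * rotS θ := by
  ext i j
  fin_cases i <;> fin_cases j <;>
    simp [rotS, Imat, Matrix.mul_apply, Fin.sum_univ_three, Matrix.diagonal, Matrix.vecHead,
      Matrix.vecTail, mul_comm]

lemma Imat_conj (θ I1 I3 : ℝ) : rotS θ * Imat I1 I3 * (rotS θ)ᵀ = Imat I1 I3 := by
  rw [rotS_mul_Imat, Matrix.mul_assoc, rotS_mul_transpose, Matrix.mul_one]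

lemma Amat_rot (b1 b3 I1 I3 m θ : ℝ) (γ : E3) :
    Amat b1 b3 I1 I3 m (rot θ γ) = rotS θ * Amat b1 b3 I1 I3 m γ * (rotS θ)ᵀ := by
  unfold Amat
  rw [avec_rot, equiv_rot, vecMulVec_conj]
  have hX : Imat I1 I3 + m • (rotS θ * Matrix.vecMulVec ((EuclideanSpace.equiv (Fin 3) ℝ) (avec b1 b3 γ))
        ((EuclideanSpace.equiv (Fin 3) ℝ) (avec b1 b3 γ)) * (rotS θ)ᵀ)
      = rotS θ * (Imat I1 I3 + m • Matrix.vecMulVec ((EuclideanSpace.equiv (Fin 3) ℝ) (avec b1 b3 γ))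
        ((EuclideanSpace.equiv (Fin 3) ℝ) (avec b1 b3 γ))) * (rotS θ)ᵀ := by
    rw [Matrix.mul_add, Matrix.add_mul, Imat_conj]
    congr 1
    rw [Matrix.mul_smul, Matrix.smul_mul]
  rw [hX, Matrix.mul_inv_rev, Matrix.mul_inv_rev, rotS_inv, rotS_transpose_inv, Matrix.mul_assoc]

lemma mulVecE_conj (θ : ℝ) (A : Matrix (Fin 3) (Fin 3) ℝ) (x : E3) :
    mulVecE (rotS θ * A * (rotS θ)ᵀ) (rot θ x) = rot θ (mulVecE A x) := by
  have hinj : Function.Injective (⇑(EuclideanSpace.equiv (Fin 3) ℝ) : E3 → (Fin 3 → ℝ)) :=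
    (EuclideanSpace.equiv (Fin 3) ℝ).injective
  apply hinj
  have h1 : (EuclideanSpace.equiv (Fin 3) ℝ) (mulVecE (rotS θ * A * (rotS θ)ᵀ) (rot θ x))
      = (rotS θ * A * (rotS θ)ᵀ).mulVec ((EuclideanSpace.equiv (Fin 3) ℝ) (rot θ x)) := rfl
  have h2 : (EuclideanSpace.equiv (Fin 3) ℝ) (mulVecE A x)
      = A.mulVec ((EuclideanSpace.equiv (Fin 3) ℝ) x) := rfl
  rw [h1, equiv_rot, equiv_rot, h2, Matrix.mulVec_mulVec, Matrix.mulVec_mulVec,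
    Matrix.mul_assoc (rotS θ * A), transpose_mul_rotS, Matrix.mul_one]

lemma mulVecE_Imat (I1 I3 : ℝ) (x : E3) : mulVecE (Imat I1 I3) x = diagOp I1 I3 x := by
  apply e3_ext <;>
    simp [mulVecE_apply, Imat, Matrix.diagonal, Matrix.vecHead, Matrix.vecTail]

lemma ham_rot (b1 b3 I1 I3 m g θ : ℝ) (M γ : E3) :
    Ham b1 b3 I1 I3 m g (rot θ M) (rot θ γ) = Ham b1 b3 I1 I3 m g M γ := by
  unfold Ham
  rw [Amat_rot, mulVecE_conj, avec_rot, rvec_rot, inner_rot, inner_rot,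
    mulVecE_Imat, rot_diagOp, ← mulVecE_Imat, inner_rot]

def nden (I1 I3 m : ℝ) (v : E3) : ℝ :=
  I1 * I3 + m * (I3 * (v 0 ^ 2 + v 1 ^ 2) + I1 * v 2 ^ 2)

def Aexp (I1 I3 m : ℝ) (v : E3) : Matrix (Fin 3) (Fin 3) ℝ :=
  Matrix.of fun i j =>
    (if i = j then (![I1, I1, I3] i)⁻¹ else 0)
      - m * I1 * I3 * v i * v j / (nden I1 I3 m v * ![I1, I1, I3] i * ![I1, I1, I3] j)

lemma Aexp_apply (I1 I3 m : ℝ) (v : E3) (i j : Fin 3) :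
    Aexp I1 I3 m v i j =
    (if i = j then (![I1, I1, I3] i)⁻¹ else 0)
      - m * I1 * I3 * v i * v j / (nden I1 I3 m v * ![I1, I1, I3] i * ![I1, I1, I3] j) := rfl

lemma nden_pos {I1 I3 m : ℝ} (hI1 : 0 < I1) (hI3 : 0 < I3) (hm : 0 < m) (v : E3) :
    0 < nden I1 I3 m v := by
  have h0 : (0:ℝ) ≤ v 0 ^ 2 + v 1 ^ 2 := by positivity
  have h2 : (0:ℝ) ≤ v 2 ^ 2 := sq_nonneg _
  have := mul_pos hI1 hI3
  unfold nden
  nlinarith [mul_nonneg (mul_nonneg hm.le hI3.le) h0, mul_nonneg (mul_nonneg hm.le hI1.le) h2]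

lemma mul_Aexp {I1 I3 m : ℝ} (hI1 : 0 < I1) (hI3 : 0 < I3) (hm : 0 < m) (v : E3) :
    (Imat I1 I3 + m • Matrix.vecMulVec ((EuclideanSpace.equiv (Fin 3) ℝ) v)
      ((EuclideanSpace.equiv (Fin 3) ℝ) v)) * Aexp I1 I3 m v = 1 := by
  have hn : nden I1 I3 m v ≠ 0 := ne_of_gt (nden_pos hI1 hI3 hm v)
  have h1 : I1 ≠ 0 := ne_of_gt hI1
  have h3 : I3 ≠ 0 := ne_of_gt hI3
  ext i j
  fin_cases i <;> fin_cases j <;>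
    · simp [Aexp_apply, Imat, Matrix.mul_apply, Fin.sum_univ_three, Matrix.vecMulVec_apply,
        Matrix.diagonal, Matrix.one_apply, Matrix.vecHead, Matrix.vecTail]
      field_simp
      simp only [nden]
      ring

lemma Amat_eq_Aexp {b1 b3 I1 I3 m : ℝ} (hI1 : 0 < I1) (hI3 : 0 < I3) (hm : 0 < m) (γ : E3) :
    Amat b1 b3 I1 I3 m γ = Aexp I1 I3 m (avec b1 b3 γ) :=
  Matrix.inv_eq_right_inv (mul_Aexp hI1 hI3 hm (avec b1 b3 γ))

lemma ham_eq_nice (b1 b3 : ℝ) {I1 I3 m : ℝ} (g : ℝ) (hI1 : 0 < I1) (hI3 : 0 < I3)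
    (hm : 0 < m) (M γ : E3) :
    Ham b1 b3 I1 I3 m g M γ =
      (1/2) * (I1 * (mulVecE (Aexp I1 I3 m (avec b1 b3 γ)) M 0)^2
        + I1 * (mulVecE (Aexp I1 I3 m (avec b1 b3 γ)) M 1)^2
        + I3 * (mulVecE (Aexp I1 I3 m (avec b1 b3 γ)) M 2)^2)
      + (1/2) * ((avec b1 b3 γ 0 * mulVecE (Aexp I1 I3 m (avec b1 b3 γ)) M 0
        + avec b1 b3 γ 1 * mulVecE (Aexp I1 I3 m (avec b1 b3 γ)) M 1)
        + avec b1 b3 γ 2 * mulVecE (Aexp I1 I3 m (avec b1 b3 γ)) M 2)^2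
      - m * g * ((rvec b1 b3 γ 0 * γ 0 + rvec b1 b3 γ 1 * γ 1) + rvec b1 b3 γ 2 * γ 2) := by
  unfold Ham
  rw [Amat_eq_Aexp hI1 hI3 hm, mulVecE_Imat, inner_e3, inner_e3, inner_e3,
    diagOp_app0, diagOp_app1, diagOp_app2]
  ring

lemma ham_differentiableAt {b1 b3 I1 I3 m : ℝ} (g : ℝ) (hb1 : 0 < b1) (hb3 : 0 < b3)
    (hI1 : 0 < I1) (hI3 : 0 < I3) (hm : 0 < m) (M γ : E3) (hγ : γ ≠ 0) :
    DifferentiableAt ℝ (fun p : E3 × E3 => Ham b1 b3 I1 I3 m g p.1 p.2) (M, γ) := by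
  -- base coordinate functions
  have hx : ∀ i : Fin 3, DifferentiableAt ℝ (fun p : E3 × E3 => p.1 i) (M, γ) := by
    intro i
    exact ((EuclideanSpace.proj i : E3 →L[ℝ] ℝ).differentiableAt).comp _ differentiableAt_fst
  have hy : ∀ i : Fin 3, DifferentiableAt ℝ (fun p : E3 × E3 => p.2 i) (M, γ) := by
    intro i
    exact ((EuclideanSpace.proj i : E3 →L[ℝ] ℝ).differentiableAt).comp _ differentiableAt_snd
  -- the quadratic form ⟪γ, Bγ⟫ is differentiable and positive
  have hQd : DifferentiableAt ℝ (fun p : E3 × E3 => ⟪p.2, diagOp (b1^2) (b3^2) p.2⟫) (M, γ) := by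
    have e : (fun p : E3 × E3 => ⟪p.2, diagOp (b1^2) (b3^2) p.2⟫)
        = fun p : E3 × E3 => p.2 0 * (b1^2 * p.2 0) + p.2 1 * (b1^2 * p.2 1)
            + p.2 2 * (b3^2 * p.2 2) := by
      funext p; rw [inner_e3]; rfl
    rw [e]
    exact (((hy 0).mul ((differentiableAt_const _).mul (hy 0))).add
      ((hy 1).mul ((differentiableAt_const _).mul (hy 1)))).add
      ((hy 2).mul ((differentiableAt_const _).mul (hy 2)))
  have hi : γ 0 ≠ 0 ∨ γ 1 ≠ 0 ∨ γ 2 ≠ 0 := by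
    by_contra h
    push_neg at h
    exact hγ (e3_ext h.1 h.2.1 h.2.2)
  have hQpos : 0 < ⟪γ, diagOp (b1^2) (b3^2) γ⟫ := by
    rw [inner_e3]
    show 0 < γ 0 * (b1^2 * γ 0) + γ 1 * (b1^2 * γ 1) + γ 2 * (b3^2 * γ 2)
    have hn1 : (0:ℝ) ≤ b1^2 * γ 0 ^ 2 := by positivity
    have hn2 : (0:ℝ) ≤ b1^2 * γ 1 ^ 2 := by positivity
    have hn3 : (0:ℝ) ≤ b3^2 * γ 2 ^ 2 := by positivity
    rcases hi with h | h | h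
    · have h0 : 0 < γ 0 ^ 2 := by positivity
      nlinarith [mul_pos (pow_pos hb1 2) h0]
    · have h0 : 0 < γ 1 ^ 2 := by positivity
      nlinarith [mul_pos (pow_pos hb1 2) h0]
    · have h0 : 0 < γ 2 ^ 2 := by positivity
      nlinarith [mul_pos (pow_pos hb3 2) h0]
  have hsval : Real.sqrt ⟪γ, diagOp (b1^2) (b3^2) γ⟫ ≠ 0 :=
    ne_of_gt (Real.sqrt_pos.mpr hQpos)
  -- the coefficient -(√Q)⁻¹ is differentiable
  have hcd : DifferentiableAt ℝ
      (fun p : E3 × E3 => -(Real.sqrt ⟪p.2, diagOp (b1^2) (b3^2) p.2⟫)⁻¹) (M, γ) :=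
    (((hQd.sqrt (ne_of_gt hQpos)).inv hsval)).neg
  -- rvec components
  have hrd : ∀ i : Fin 3, DifferentiableAt ℝ (fun p : E3 × E3 => rvec b1 b3 p.2 i) (M, γ) := by
    intro i
    fin_cases i
    · exact hcd.mul ((differentiableAt_const (b1^2)).mul (hy 0))
    · exact hcd.mul ((differentiableAt_const (b1^2)).mul (hy 1))
    · exact hcd.mul ((differentiableAt_const (b3^2)).mul (hy 2))
  -- avec components
  have had : ∀ i : Fin 3, DifferentiableAt ℝ (fun p : E3 × E3 => avec b1 b3 p.2 i) (M, γ) := by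
    intro i
    fin_cases i
    · exact ((hy 1).mul (hrd 2)).sub ((hy 2).mul (hrd 1))
    · exact ((hy 2).mul (hrd 0)).sub ((hy 0).mul (hrd 2))
    · exact ((hy 0).mul (hrd 1)).sub ((hy 1).mul (hrd 0))
  -- the denominator nden is differentiable and nonzero
  have hndend : DifferentiableAt ℝ
      (fun p : E3 × E3 => nden I1 I3 m (avec b1 b3 p.2)) (M, γ) := by
    show DifferentiableAt ℝ (fun p : E3 × E3 =>
      I1 * I3 + m * (I3 * ((avec b1 b3 p.2 0)^2 + (avec b1 b3 p.2 1)^2)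
        + I1 * (avec b1 b3 p.2 2)^2)) (M, γ)
    exact (differentiableAt_const _).add ((differentiableAt_const m).mul
      (((differentiableAt_const I3).mul (((had 0).pow 2).add ((had 1).pow 2))).add
        ((differentiableAt_const I1).mul ((had 2).pow 2))))
  -- Aexp entries are differentiable
  have hcne : ∀ i : Fin 3, (![I1, I1, I3] i) ≠ 0 := by
    intro i
    fin_cases i <;> simp [ne_of_gt hI1, ne_of_gt hI3]
  have hAd : ∀ i j : Fin 3, DifferentiableAt ℝ
      (fun p : E3 × E3 => Aexp I1 I3 m (avec b1 b3 p.2) i j) (M, γ) := by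
    intro i j
    have e : (fun p : E3 × E3 => Aexp I1 I3 m (avec b1 b3 p.2) i j)
        = fun p : E3 × E3 => (if i = j then (![I1, I1, I3] i)⁻¹ else 0)
          - m * I1 * I3 * avec b1 b3 p.2 i * avec b1 b3 p.2 j
            * (nden I1 I3 m (avec b1 b3 p.2) * ![I1, I1, I3] i * ![I1, I1, I3] j)⁻¹ := by
      funext p; rw [Aexp_apply, div_eq_mul_inv]
    rw [e]
    exact (differentiableAt_const _).sub
      ((((differentiableAt_const (m * I1 * I3)).mul (had i)).mul (had j)).mul
        (((hndend.mul_const _).mul_const _).inv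
          (mul_ne_zero (mul_ne_zero (ne_of_gt (nden_pos hI1 hI3 hm (avec b1 b3 γ))) (hcne i))
            (hcne j))))
  -- the components of A(γ)M
  have hwd : ∀ i : Fin 3, DifferentiableAt ℝ
      (fun p : E3 × E3 => mulVecE (Aexp I1 I3 m (avec b1 b3 p.2)) p.1 i) (M, γ) := by
    intro i
    have e : (fun p : E3 × E3 => mulVecE (Aexp I1 I3 m (avec b1 b3 p.2)) p.1 i)
        = fun p : E3 × E3 => Aexp I1 I3 m (avec b1 b3 p.2) i 0 * p.1 0
          + Aexp I1 I3 m (avec b1 b3 p.2) i 1 * p.1 1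
          + Aexp I1 I3 m (avec b1 b3 p.2) i 2 * p.1 2 := by
      funext p; rw [mulVecE_apply]
    rw [e]
    exact (((hAd i 0).mul (hx 0)).add ((hAd i 1).mul (hx 1))).add ((hAd i 2).mul (hx 2))
  -- now assemble the Hamiltonian
  have e : (fun p : E3 × E3 => Ham b1 b3 I1 I3 m g p.1 p.2)
      = fun p : E3 × E3 =>
      (1/2) * (I1 * (mulVecE (Aexp I1 I3 m (avec b1 b3 p.2)) p.1 0)^2
        + I1 * (mulVecE (Aexp I1 I3 m (avec b1 b3 p.2)) p.1 1)^2
        + I3 * (mulVecE (Aexp I1 I3 m (avec b1 b3 p.2)) p.1 2)^2)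
      + (1/2) * ((avec b1 b3 p.2 0 * mulVecE (Aexp I1 I3 m (avec b1 b3 p.2)) p.1 0
        + avec b1 b3 p.2 1 * mulVecE (Aexp I1 I3 m (avec b1 b3 p.2)) p.1 1)
        + avec b1 b3 p.2 2 * mulVecE (Aexp I1 I3 m (avec b1 b3 p.2)) p.1 2)^2
      - m * g * ((rvec b1 b3 p.2 0 * p.2 0 + rvec b1 b3 p.2 1 * p.2 1)
        + rvec b1 b3 p.2 2 * p.2 2) := by
    funext p
    exact ham_eq_nice b1 b3 g hI1 hI3 hm p.1 p.2
  rw [e]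
  refine DifferentiableAt.sub (DifferentiableAt.add ?_ ?_) ?_
  · exact (differentiableAt_const _).mul
      ((((differentiableAt_const I1).mul ((hwd 0).pow 2)).add
        ((differentiableAt_const I1).mul ((hwd 1).pow 2))).add
        ((differentiableAt_const I3).mul ((hwd 2).pow 2)))
  · exact (differentiableAt_const _).mul
      (((((had 0).mul (hwd 0)).add ((had 1).mul (hwd 1))).add ((had 2).mul (hwd 2))).pow 2)
  · exact (differentiableAt_const _).mul
      ((((hrd 0).mul (hy 0)).add ((hrd 1).mul (hy 1))).add ((hrd 2).mul (hy 2)))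

lemma grad_pair (H : E3 → E3 → ℝ) (M0 γ0 : E3)
    (hF : DifferentiableAt ℝ (fun p : E3 × E3 => H p.1 p.2) (M0, γ0)) (u v : E3) :
    fderiv ℝ (fun p : E3 × E3 => H p.1 p.2) (M0, γ0) (u, v)
      = ⟪gradM H M0 γ0, u⟫ + ⟪gradG H M0 γ0, v⟫ := by
  have hMslice : HasFDerivAt (fun M' : E3 => H M' γ0)
      ((fderiv ℝ (fun p : E3 × E3 => H p.1 p.2) (M0, γ0)).comp
        ((ContinuousLinearMap.id ℝ E3).prod 0)) M0 := by
    have h1 : HasFDerivAt (fun M' : E3 => ((M', γ0) : E3 × E3))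
        ((ContinuousLinearMap.id ℝ E3).prod 0) M0 :=
      (hasFDerivAt_id M0).prodMk (hasFDerivAt_const γ0 M0)
    exact hF.hasFDerivAt.comp M0 h1
  have hGslice : HasFDerivAt (fun γ' : E3 => H M0 γ')
      ((fderiv ℝ (fun p : E3 × E3 => H p.1 p.2) (M0, γ0)).comp
        ((0 : E3 →L[ℝ] E3).prod (ContinuousLinearMap.id ℝ E3))) γ0 := by
    have h1 : HasFDerivAt (fun γ' : E3 => ((M0, γ') : E3 × E3))
        ((0 : E3 →L[ℝ] E3).prod (ContinuousLinearMap.id ℝ E3)) γ0 :=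
      (hasFDerivAt_const M0 γ0).prodMk (hasFDerivAt_id γ0)
    exact hF.hasFDerivAt.comp γ0 h1
  have e1 : ⟪gradM H M0 γ0, u⟫ = fderiv ℝ (fun p : E3 × E3 => H p.1 p.2) (M0, γ0) (u, 0) := by
    unfold gradM gradient
    rw [InnerProductSpace.toDual_symm_apply, hMslice.fderiv]
    simp
  have e2 : ⟪gradG H M0 γ0, v⟫ = fderiv ℝ (fun p : E3 × E3 => H p.1 p.2) (M0, γ0) (0, v) := by
    unfold gradG gradient
    rw [InnerProductSpace.toDual_symm_apply, hGslice.fderiv]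
    simp
  rw [e1, e2, ← ContinuousLinearMap.map_add]
  congr 1
  simp

lemma rot_hasDerivAt (x : E3) :
    HasDerivAt (fun θ => rot θ x) (vec3 (-(x 1)) (x 0) 0) 0 := by
  have hp : HasDerivAt (fun θ => ![Real.cos θ * x 0 - Real.sin θ * x 1,
      Real.sin θ * x 0 + Real.cos θ * x 1, x 2]) ![-(x 1), x 0, 0] 0 := by
    rw [hasDerivAt_pi]
    intro i
    fin_cases i
    · simpa using ((Real.hasDerivAt_cos 0).mul_const (x 0)).fun_sub
        ((Real.hasDerivAt_sin 0).mul_const (x 1))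
    · simpa using ((Real.hasDerivAt_sin 0).mul_const (x 0)).fun_add
        ((Real.hasDerivAt_cos 0).mul_const (x 1))
    · simpa using hasDerivAt_const (0:ℝ) (x 2)
  exact ((EuclideanSpace.equiv (Fin 3) ℝ).symm.toContinuousLinearMap.hasFDerivAt).comp_hasDerivAt
    0 hp

lemma key_identity {b1 b3 I1 I3 m : ℝ} (g : ℝ) (hb1 : 0 < b1) (hb3 : 0 < b3) (hI1 : 0 < I1)
    (hI3 : 0 < I3) (hm : 0 < m) (M0 γ0 : E3) (hγ : γ0 ≠ 0) :
    gradM (Ham b1 b3 I1 I3 m g) M0 γ0 1 * M0 0 - gradM (Ham b1 b3 I1 I3 m g) M0 γ0 0 * M0 1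
      + gradG (Ham b1 b3 I1 I3 m g) M0 γ0 1 * γ0 0
      - gradG (Ham b1 b3 I1 I3 m g) M0 γ0 0 * γ0 1 = 0 := by
  have hF := ham_differentiableAt g hb1 hb3 hI1 hI3 hm M0 γ0 hγ
  have hcurve : HasDerivAt (fun θ => ((rot θ M0, rot θ γ0) : E3 × E3))
      ((vec3 (-(M0 1)) (M0 0) 0, vec3 (-(γ0 1)) (γ0 0) 0)) 0 :=
    (rot_hasDerivAt M0).prodMk (rot_hasDerivAt γ0)
  have hFat : HasFDerivAt (fun p : E3 × E3 => Ham b1 b3 I1 I3 m g p.1 p.2)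
      (fderiv ℝ (fun p : E3 × E3 => Ham b1 b3 I1 I3 m g p.1 p.2) (M0, γ0))
      ((fun θ => ((rot θ M0, rot θ γ0) : E3 × E3)) 0) := by
    have h0 : ((rot 0 M0, rot 0 γ0) : E3 × E3) = (M0, γ0) := by rw [rot_zero, rot_zero]
    rw [show (fun θ => ((rot θ M0, rot θ γ0) : E3 × E3)) 0 = (M0, γ0) from h0]
    exact hF.hasFDerivAt
  have hcomp := hFat.comp_hasDerivAt 0 hcurve
  have heq : ((fun p : E3 × E3 => Ham b1 b3 I1 I3 m g p.1 p.2)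
      ∘ (fun θ => ((rot θ M0, rot θ γ0) : E3 × E3)))
      = fun _ : ℝ => Ham b1 b3 I1 I3 m g M0 γ0 := by
    funext θ
    exact ham_rot b1 b3 I1 I3 m g θ M0 γ0
  rw [heq] at hcomp
  have hzero := hcomp.unique (hasDerivAt_const 0 _)
  rw [grad_pair (Ham b1 b3 I1 I3 m g) M0 γ0 hF (vec3 (-(M0 1)) (M0 0) 0)
    (vec3 (-(γ0 1)) (γ0 0) 0), inner_e3, inner_e3] at hzero
  simp only [vec3_app0, vec3_app1, vec3_app2] at hzero
  linear_combination hzero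

/-- Lagrange integral: along every solution (M(t), γ(t)) of the Euler–Poisson
equations on e(3)* with the Hamiltonian of the ellipsoid of revolution on a smooth plane, with
γ(t) ≠ 0 for all t, the third component M₃(t) of the angular momentum is constant. -/
theorem lagrange_integral (b1 b3 I1 I3 m g : ℝ)
    (hb1 : 0 < b1) (hb3 : 0 < b3) (hI1 : 0 < I1) (hI3 : 0 < I3) (hm : 0 < m) (hg : 0 < g)
    (M γ : ℝ → E3) (hγne : ∀ t, γ t ≠ 0)
    (hsol : EulerPoisson (Ham b1 b3 I1 I3 m g) M γ) :
    ∀ t s : ℝ, M t 2 = M s 2 := by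
  obtain ⟨hMd, hγd, hM', _⟩ := hsol
  have hD : ∀ t, HasDerivAt (fun t => M t 2) ((deriv M t) 2) t := by
    intro t
    exact ((EuclideanSpace.proj (2 : Fin 3) : E3 →L[ℝ] ℝ).hasFDerivAt).comp_hasDerivAt t
      (hMd t).hasDerivAt
  have hzero : ∀ t, deriv (fun t => M t 2) t = 0 := by
    intro t
    rw [(hD t).deriv, hM' t]
    show cross3 (M t) (gradM (Ham b1 b3 I1 I3 m g) (M t) (γ t)) 2
        + cross3 (γ t) (gradG (Ham b1 b3 I1 I3 m g) (M t) (γ t)) 2 = 0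
    rw [cross3_app2, cross3_app2]
    have hkey := key_identity g hb1 hb3 hI1 hI3 hm (M t) (γ t) (hγne t)
    linear_combination hkey
  intro t s
  exact is_const_of_deriv_eq_zero (fun x => (hD x).differentiableAt) hzero t s
end
end

section
/- Vertical rotations are relative equilibria of the ellipsoid on a smooth plane: for every p ∈ ℝ and ε ∈ {+1, −1}, the constant curves M(t) ≡ (0, 0, p), γ(t) ≡ (0, 0, ε) solve the Euler–Poisson equations on e(3)* with the Hamiltonian H of the ellipsoid of revolution on a smooth plane; equivalently, at these points M × ∂H/∂M + γ × ∂H/∂γ = 0 and γ × ∂H/∂M = 0. -/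
open scoped RealInnerProductSpace

noncomputable section

namespace VertAux

/-- the reflection/rotation (x,y,z) ↦ (−x,−y,z) -/
def R (x : E3) : E3 := vec3 (-(x 0)) (-(x 1)) (x 2)

def d3 : Fin 3 → ℝ := ![-1, -1, 1]

def Rm : Matrix (Fin 3) (Fin 3) ℝ := Matrix.diagonal d3

lemma vec3_apply (x y z : ℝ) (i : Fin 3) : vec3 x y z i = ![x, y, z] i := rfl

lemma R_apply (x : E3) (i : Fin 3) : R x i = d3 i * x i := by
  fin_cases i <;> simp [R, vec3_apply, d3] <;> ring

lemma e3_ext {x y : E3} (h : ∀ i, x i = y i) : x = y := PiLp.ext h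

lemma inner_R (x y : E3) : ⟪R x, R y⟫ = ⟪x, y⟫ := by
  simp only [PiLp.inner_apply, RCLike.inner_apply, conj_trivial, Fin.sum_univ_three, R_apply, d3]
  norm_num
  simp [Matrix.cons_val_two, Matrix.vecHead, Matrix.vecTail]

lemma R_smul (c : ℝ) (x : E3) : R (c • x) = c • R x := by
  refine e3_ext fun i => ?_
  simp only [R_apply, PiLp.smul_apply, smul_eq_mul]
  ring

lemma diagOp_R (c1 c3 : ℝ) (x : E3) : diagOp c1 c3 (R x) = R (diagOp c1 c3 x) := by
  refine e3_ext fun i => ?_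
  fin_cases i <;> simp [diagOp, R_apply, vec3_apply, d3] <;> ring

lemma rvec_R (b1 b3 : ℝ) (γ : E3) : rvec b1 b3 (R γ) = R (rvec b1 b3 γ) := by
  unfold rvec
  rw [diagOp_R, inner_R, R_smul]

lemma cross3_R (x y : E3) : cross3 (R x) (R y) = R (cross3 x y) := by
  refine e3_ext fun i => ?_
  fin_cases i <;>
    simp [cross3, R_apply, vec3_apply, d3, Matrix.cons_val_zero, Matrix.cons_val_one] <;> ring

lemma avec_R (b1 b3 : ℝ) (γ : E3) : avec b1 b3 (R γ) = R (avec b1 b3 γ) := by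
  unfold avec
  rw [rvec_R, cross3_R]

lemma Rm_mul_Rm : Rm * Rm = 1 := by
  rw [Rm, Matrix.diagonal_mul_diagonal]
  have : (fun i => d3 i * d3 i) = fun _ => (1:ℝ) := by funext i; fin_cases i <;> simp [d3]
  rw [this, Matrix.diagonal_one]

lemma Rm_inv : Rm⁻¹ = Rm := Matrix.inv_eq_right_inv Rm_mul_Rm

lemma mulVecE_R (A : Matrix (Fin 3) (Fin 3) ℝ) (x : E3) :
    mulVecE A (R x) = mulVecE (A * Rm) x := by
  refine e3_ext fun i => ?_
  show (A.mulVec fun j => R x j) i = ((A * Rm).mulVec fun j => x j) i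
  rw [← Matrix.mulVec_mulVec]
  congr 1
  funext j
  simp [Rm, Matrix.mulVec_diagonal, R_apply, mul_comm]

lemma R_mulVecE (A : Matrix (Fin 3) (Fin 3) ℝ) (x : E3) :
    R (mulVecE A x) = mulVecE (Rm * A) x := by
  refine e3_ext fun i => ?_
  rw [R_apply]
  show d3 i * (A.mulVec fun j => x j) i = ((Rm * A).mulVec fun j => x j) i
  rw [← Matrix.mulVec_mulVec]
  simp [Rm, Matrix.mulVec_diagonal]

lemma Imat_comm : Imat I1 I3 * Rm = Rm * Imat I1 I3 := by
  rw [Imat, Rm, Matrix.diagonal_mul_diagonal, Matrix.diagonal_mul_diagonal]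
  have : (fun i => ![I1, I1, I3] i * d3 i) = fun i => d3 i * ![I1, I1, I3] i := by
    funext i; ring
  rw [this]

lemma Amat_R (b1 b3 I1 I3 m : ℝ) (γ : E3) :
    Amat b1 b3 I1 I3 m (R γ) = Rm * Amat b1 b3 I1 I3 m γ * Rm := by
  unfold Amat
  rw [avec_R]
  have hvv : Matrix.vecMulVec ((EuclideanSpace.equiv (Fin 3) ℝ) (R (avec b1 b3 γ)))
      ((EuclideanSpace.equiv (Fin 3) ℝ) (R (avec b1 b3 γ)))
      = Rm * Matrix.vecMulVec ((EuclideanSpace.equiv (Fin 3) ℝ) (avec b1 b3 γ))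
          ((EuclideanSpace.equiv (Fin 3) ℝ) (avec b1 b3 γ)) * Rm := by
    ext i j
    simp only [Matrix.vecMulVec_apply, Rm, Matrix.diagonal_mul, Matrix.mul_diagonal]
    show R (avec b1 b3 γ) i * R (avec b1 b3 γ) j
        = d3 i * (avec b1 b3 γ i * avec b1 b3 γ j) * d3 j
    rw [R_apply, R_apply]; ring
  rw [hvv]
  have : Imat I1 I3 + m • (Rm * Matrix.vecMulVec ((EuclideanSpace.equiv (Fin 3) ℝ) (avec b1 b3 γ))
          ((EuclideanSpace.equiv (Fin 3) ℝ) (avec b1 b3 γ)) * Rm)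
      = Rm * (Imat I1 I3 + m • Matrix.vecMulVec ((EuclideanSpace.equiv (Fin 3) ℝ) (avec b1 b3 γ))
          ((EuclideanSpace.equiv (Fin 3) ℝ) (avec b1 b3 γ))) * Rm := by
    rw [Matrix.mul_add, Matrix.add_mul]
    congr 1
    · rw [← Imat_comm, Matrix.mul_assoc, Rm_mul_Rm, Matrix.mul_one]
    · rw [Matrix.mul_smul, Matrix.smul_mul]
  rw [this, Matrix.mul_inv_rev, Matrix.mul_inv_rev, Rm_inv, Matrix.mul_assoc]

lemma Ham_R (b1 b3 I1 I3 m g : ℝ) (M γ : E3) :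
    Ham b1 b3 I1 I3 m g (R M) (R γ) = Ham b1 b3 I1 I3 m g M γ := by
  unfold Ham
  have hA : mulVecE (Amat b1 b3 I1 I3 m (R γ)) (R M)
      = R (mulVecE (Amat b1 b3 I1 I3 m γ) M) := by
    rw [Amat_R, mulVecE_R, R_mulVecE, Matrix.mul_assoc, Matrix.mul_assoc, Rm_mul_Rm,
      Matrix.mul_one]
  have hI : ∀ x : E3, mulVecE (Imat I1 I3) (R x) = R (mulVecE (Imat I1 I3) x) := by
    intro x
    rw [mulVecE_R, R_mulVecE, Imat_comm]
  rw [hA, hI, inner_R, avec_R, inner_R, rvec_R, inner_R]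

/-- key lemma: at a point fixed by R, the gradient of an R-invariant function has
vanishing first two components. -/
lemma grad_comp_zero (f : E3 → ℝ) (hinv : ∀ y, f (R y) = f y) (x : E3) (hx : R x = x)
    (i : Fin 3) (hi : R (EuclideanSpace.single i (1:ℝ)) = -EuclideanSpace.single i 1) :
    gradient f x i = 0 := by
  -- R as a continuous linear equivalence
  have hinvol : Function.Involutive R := by
    intro y
    refine e3_ext fun j => ?_
    rw [R_apply, R_apply]
    fin_cases j <;> simp [d3] <;> ring
  let Rlin : E3 →ₗ[ℝ] E3 :=
    { toFun := R
      map_add' := by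
        intro a b
        refine e3_ext fun j => ?_
        simp only [R_apply, PiLp.add_apply]
        ring
      map_smul' := by
        intro c a
        simpa using R_smul c a }
  let Req : E3 ≃ₗ[ℝ] E3 := LinearEquiv.ofInvolutive Rlin hinvol
  let Riso : E3 ≃L[ℝ] E3 := Req.toContinuousLinearEquiv
  have hRiso : ∀ y, Riso y = R y := fun _ => rfl
  have hcomp : f ∘ Riso = f := by
    funext y
    simp only [Function.comp_apply, hRiso]
    exact hinv y
  have hfd : fderiv ℝ f x = (fderiv ℝ f x).comp (Riso : E3 →L[ℝ] E3) := by
    conv_lhs => rw [← hcomp]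
    rw [Riso.comp_right_fderiv, hRiso, hx]
  have hder : fderiv ℝ f x (EuclideanSpace.single i 1) = 0 := by
    have h1 : fderiv ℝ f x (EuclideanSpace.single i 1)
        = fderiv ℝ f x (R (EuclideanSpace.single i 1)) := by
      conv_lhs => rw [hfd]
      simp only [ContinuousLinearMap.comp_apply, ContinuousLinearEquiv.coe_coe, hRiso]
    rw [hi, map_neg] at h1
    linarith
  have : gradient f x i = fderiv ℝ f x (EuclideanSpace.single i 1) := by
    rw [gradient]
    rw [show (InnerProductSpace.toDual ℝ E3).symm (fderiv ℝ f x) i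
        = ⟪(InnerProductSpace.toDual ℝ E3).symm (fderiv ℝ f x), EuclideanSpace.single i 1⟫ by
      rw [EuclideanSpace.inner_single_right]; simp]
    rw [InnerProductSpace.toDual_symm_apply]
  rw [this, hder]

lemma R_single0 : R (EuclideanSpace.single (0 : Fin 3) (1:ℝ)) = -EuclideanSpace.single 0 1 := by
  refine e3_ext fun j => ?_
  rw [R_apply]
  fin_cases j <;> simp [d3, EuclideanSpace.single_apply]

lemma R_single1 : R (EuclideanSpace.single (1 : Fin 3) (1:ℝ)) = -EuclideanSpace.single 1 1 := by
  refine e3_ext fun j => ?_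
  rw [R_apply]
  fin_cases j <;> simp [d3, EuclideanSpace.single_apply]

lemma R_axis (c : ℝ) : R (vec3 0 0 c) = vec3 0 0 c := by
  refine e3_ext fun j => ?_
  rw [R_apply]
  fin_cases j <;> simp [d3, vec3_apply]

lemma cross3_axis (c : ℝ) (v : E3) (h0 : v 0 = 0) (h1 : v 1 = 0) :
    cross3 (vec3 0 0 c) v = 0 := by
  refine e3_ext fun j => ?_
  fin_cases j <;> simp [cross3, vec3_apply, h0, h1]

end VertAux

/-- vertical rotations are relative equilibria of the ellipsoid on a smooth plane:
for M = (0,0,p), γ = (0,0,±1), the constant curves solve the Euler–Poisson equations with the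
Hamiltonian H of the ellipsoid on a smooth plane; equivalently, at these points
M × ∂H/∂M + γ × ∂H/∂γ = 0 and γ × ∂H/∂M = 0. -/
theorem vertical_rotations_are_equilibria (b1 b3 I1 I3 m g : ℝ)
    (hb1 : 0 < b1) (hb3 : 0 < b3) (hI1 : 0 < I1) (hI3 : 0 < I3) (hm : 0 < m) (hg : 0 < g)
    (p ε : ℝ) (hε : ε = 1 ∨ ε = -1) :
    EulerPoisson (Ham b1 b3 I1 I3 m g) (fun _ => vec3 0 0 p) (fun _ => vec3 0 0 ε) ∧
    cross3 (vec3 0 0 p) (gradM (Ham b1 b3 I1 I3 m g) (vec3 0 0 p) (vec3 0 0 ε))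
      + cross3 (vec3 0 0 ε) (gradG (Ham b1 b3 I1 I3 m g) (vec3 0 0 p) (vec3 0 0 ε)) = 0 ∧
    cross3 (vec3 0 0 ε) (gradM (Ham b1 b3 I1 I3 m g) (vec3 0 0 p) (vec3 0 0 ε)) = 0 := by
  classical
  set H := Ham b1 b3 I1 I3 m g
  set M0 : E3 := vec3 0 0 p
  set G0 : E3 := vec3 0 0 ε
  have hinvM : ∀ y, H (VertAux.R y) G0 = H y G0 := by
    intro y
    conv_lhs => rw [show G0 = VertAux.R G0 from (VertAux.R_axis ε).symm]
    exact VertAux.Ham_R b1 b3 I1 I3 m g y G0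
  have hinvG : ∀ y, H M0 (VertAux.R y) = H M0 y := by
    intro y
    conv_lhs => rw [show M0 = VertAux.R M0 from (VertAux.R_axis p).symm]
    exact VertAux.Ham_R b1 b3 I1 I3 m g M0 y
  have hgM0 : gradM H M0 G0 0 = 0 :=
    VertAux.grad_comp_zero _ hinvM M0 (VertAux.R_axis p) 0 VertAux.R_single0
  have hgM1 : gradM H M0 G0 1 = 0 :=
    VertAux.grad_comp_zero _ hinvM M0 (VertAux.R_axis p) 1 VertAux.R_single1
  have hgG0 : gradG H M0 G0 0 = 0 :=
    VertAux.grad_comp_zero _ hinvG G0 (VertAux.R_axis ε) 0 VertAux.R_single0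
  have hgG1 : gradG H M0 G0 1 = 0 :=
    VertAux.grad_comp_zero _ hinvG G0 (VertAux.R_axis ε) 1 VertAux.R_single1
  have hc1 : cross3 M0 (gradM H M0 G0) = 0 := VertAux.cross3_axis p _ hgM0 hgM1
  have hc2 : cross3 G0 (gradG H M0 G0) = 0 := VertAux.cross3_axis ε _ hgG0 hgG1
  have hc3 : cross3 G0 (gradM H M0 G0) = 0 := VertAux.cross3_axis ε _ hgM0 hgM1
  refine ⟨⟨differentiable_const _, differentiable_const _, ?_, ?_⟩, ?_, ?_⟩
  · intro t
    simp only [deriv_const, hc1, hc2, add_zero]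
  · intro t
    simp only [deriv_const, hc3]
  · rw [hc1, hc2, add_zero]
  · exact hc3
end
end
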